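/- Let X be a compact Hausdorff space, F a Banach lattice, and T : C(X) → F a disjointness preserving linear operator with nonempty finite singularity set {x₁,…,x_n}. Then there exist a continuous disjointness preserving operator R : C(X) → F and disjointness preserving operators S₁,…,S_n : C(X) → F with T = R + S₁ + … + S_n, where each S_i vanishes on J_{x_i} (the ideal of functions vanishing on a neighborhood of x_i) but does not vanish identically on M_{x_i} = {f : f(x_i) = 0}. -/

import Mathlib

open Filter Topology
set_option linter.unusedSectionVars false
set_option linter.unusedVariables false
set_option maxHeartbeats 2000000

variable {X : Type*} [TopologicalSpace X] [CompactSpace X] [T2Space X]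
  {F : Type*} [NormedAddCommGroup F] [Lattice F] [IsOrderedAddMonoid F] [HasSolidNorm F]
  [NormedSpace ℝ F] [CompleteSpace F]

/-- The closed ideal of `C(X)` of functions vanishing off the open set `U`. -/
def KU (U : Set X) : Set C(X, ℝ) := {f : C(X, ℝ) | ∀ x ∉ U, f x = 0}

/-- The singularity set of `T`: the points `x` such that for every open neighborhood `U`
of `x`, the restriction of `T` to `K_U` is unbounded (discontinuous). -/
def SingSet (T : C(X, ℝ) →ₗ[ℝ] F) : Set X :=
  {x : X | ∀ U : Set X, IsOpen U → x ∈ U →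
    ¬∃ C : ℝ, ∀ f ∈ KU U, ‖T f‖ ≤ C * ‖f‖}


lemma aux_abs_le_of_disj {a b : F} (h : |a| ⊓ |b| = 0) : |b| ≤ |a + b| := by
  have h1 : |b| ≤ |a + b| + |a| := by
    have := abs_add_le (a + b) (-a)
    simpa using this
  have h2 : |b| - |a| ≤ |a + b| := sub_le_iff_le_add.2 h1
  have h3 : (|b| - |a|) ⊔ 0 ≤ |a + b| := sup_le h2 (abs_nonneg _)
  have h4 : (|b| - |a|) ⊔ 0 = |b| := by
    have hs : |a| ⊓ |b| + |a| ⊔ |b| = |a| + |b| := inf_add_sup _ _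
    rw [h, zero_add] at hs
    have : (|b| ⊔ |a|) - |a| = (|b| - |a|) ⊔ (|a| - |a|) := sup_sub _ _ _
    simpa [sub_self, sup_comm (|b|) (|a|), hs] using this.symm
  rwa [h4] at h3

lemma aux_norm_le_of_disj {a b : F} (h : |a| ⊓ |b| = 0) : ‖b‖ ≤ ‖a + b‖ := by
  have := HasSolidNorm.solid (by simpa using aux_abs_le_of_disj h)
  simpa [norm_abs_eq_norm] using this

lemma aux_nested {N : Set X} (hN : IsOpen N) {z : X} (hz : z ∈ N) :
    ∃ Q : Set X, IsOpen Q ∧ z ∈ Q ∧ closure Q ⊆ N := by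
  obtain ⟨t, ht, htc, hts⟩ := exists_mem_nhds_isClosed_subset (hN.mem_nhds hz)
  exact ⟨interior t, isOpen_interior, mem_interior_iff_mem_nhds.2 ht,
    (closure_minimal interior_subset htc).trans hts⟩

lemma aux_urysohn {s t : Set X} (hs : IsClosed s) (ht : IsClosed t) (h : Disjoint s t) :
    ∃ σ : C(X,ℝ), (∀ y ∈ s, σ y = 0) ∧ (∀ y ∈ t, σ y = 1) ∧ ∀ y, 0 ≤ σ y ∧ σ y ≤ 1 := by
  obtain ⟨f, h0, h1, h01⟩ := exists_continuous_zero_one_of_isClosed hs ht h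
  exact ⟨f, fun y hy => by simpa using h0 hy, fun y hy => by simpa using h1 hy,
    fun y => ⟨(h01 y).1, (h01 y).2⟩⟩

lemma aux_tendsto_inf_abs {u v : ℕ → F} {a b : F} (hu : Tendsto u atTop (𝓝 a))
    (hv : Tendsto v atTop (𝓝 b)) (h : ∀ k, |u k| ⊓ |v k| = 0) : |a| ⊓ |b| = 0 := by
  have habs : ∀ {w : ℕ → F} {c : F}, Tendsto w atTop (𝓝 c) → Tendsto (fun k => |w k|) atTop (𝓝 |c|) := by
    intro w c hw
    simpa [abs] using (hw.sup_nhds hw.neg)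
  have : Tendsto (fun k => |u k| ⊓ |v k|) atTop (𝓝 (|a| ⊓ |b|)) := (habs hu).inf_nhds (habs hv)
  have h0 : Tendsto (fun _ : ℕ => (0:F)) atTop (𝓝 (|a| ⊓ |b|)) := by
    simpa [h] using this
  exact tendsto_nhds_unique h0 tendsto_const_nhds


lemma cnorm_le {f : C(X,ℝ)} {M : ℝ} (hM : 0 ≤ M) (h : ∀ y, |f y| ≤ M) : ‖f‖ ≤ M :=
  (ContinuousMap.norm_le f hM).2 (by simpa [Real.norm_eq_abs] using h)

lemma cnorm_apply_le (f : C(X,ℝ)) (y : X) : |f y| ≤ ‖f‖ := by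
  simpa [Real.norm_eq_abs] using f.norm_coe_le_norm y

lemma lemA_aux (T : C(X,ℝ) →ₗ[ℝ] F) :
    ∀ l : List (Set X × Set X),
      (∀ p ∈ l, closure p.1 ⊆ p.2 ∧ IsOpen p.2 ∧
        ∃ C : ℝ, ∀ f : C(X,ℝ), (∀ y ∉ p.2, f y = 0) → ‖T f‖ ≤ C * ‖f‖) →
      ∃ C : ℝ, 0 ≤ C ∧ ∀ f : C(X,ℝ),
        (∀ y, f y ≠ 0 → ∃ p ∈ l, y ∈ p.1) → ‖T f‖ ≤ C * ‖f‖ := by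
  intro l
  induction l with
  | nil =>
    intro _
    refine ⟨0, le_refl 0, fun f hf => ?_⟩
    have : f = 0 := by
      ext y
      by_contra hy
      obtain ⟨p, hp, _⟩ := hf y (by simpa using hy)
      exact List.not_mem_nil hp
    simp [this]
  | cons p l ih =>
    intro hl
    obtain ⟨hcl, hUo, C, hC⟩ := hl p List.mem_cons_self
    obtain ⟨Cl, hCl0, hCl⟩ := ih (fun q hq => hl q (List.mem_cons_of_mem p hq))
    have hdisj : Disjoint ((p.2)ᶜ : Set X) (closure p.1) :=
      Set.disjoint_left.2 fun y hy hyc => hy (hcl hyc)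
    obtain ⟨ψ, hψ0, hψ1, hψ01⟩ := aux_urysohn (isClosed_compl_iff.2 hUo) isClosed_closure hdisj
    refine ⟨max C 0 + Cl, by positivity, fun f hf => ?_⟩
    have hTf : T f = T (f * ψ) + T (f - f * ψ) := by
      rw [← map_add]; ring_nf
    have hg : ∀ y ∉ p.2, (f * ψ) y = 0 := fun y hy => by
      simp [ContinuousMap.mul_apply, hψ0 y hy]
    have hng : ‖f * ψ‖ ≤ ‖f‖ := cnorm_le (norm_nonneg f) fun y => by
      rw [ContinuousMap.mul_apply, abs_mul]
      calc |f y| * |ψ y| ≤ |f y| * 1 := by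
            have := (hψ01 y)
            exact mul_le_mul_of_nonneg_left (by rw [abs_of_nonneg this.1]; exact this.2)
              (abs_nonneg _)
        _ ≤ ‖f‖ := by rw [mul_one]; exact cnorm_apply_le f y
    have hh : ∀ y, (f - f * ψ) y ≠ 0 → ∃ q ∈ l, y ∈ q.1 := by
      intro y hy
      have hy' : f y - f y * ψ y ≠ 0 := by
        simpa [ContinuousMap.sub_apply, ContinuousMap.mul_apply] using hy
      have hfy : f y ≠ 0 := fun h => by simp [h] at hy'
      have hψy : ψ y ≠ 1 := fun h => by simp [h] at hy'
      obtain ⟨q, hq, hyq⟩ := hf y hfy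
      rcases List.mem_cons.1 hq with rfl | hq'
      · exact absurd (hψ1 y (subset_closure hyq)) hψy
      · exact ⟨q, hq', hyq⟩
    have hnh : ‖f - f * ψ‖ ≤ ‖f‖ := cnorm_le (norm_nonneg f) fun y => by
      rw [ContinuousMap.sub_apply, ContinuousMap.mul_apply]
      have h01 := hψ01 y
      have : |f y - f y * ψ y| = |f y| * |1 - ψ y| := by
        rw [← abs_mul]; ring_nf
      rw [this]
      calc |f y| * |1 - ψ y| ≤ |f y| * 1 := by
            refine mul_le_mul_of_nonneg_left ?_ (abs_nonneg _)
            rw [abs_of_nonneg (by linarith [h01.2])]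
            linarith [h01.1]
        _ ≤ ‖f‖ := by rw [mul_one]; exact cnorm_apply_le f y
    calc ‖T f‖ ≤ ‖T (f * ψ)‖ + ‖T (f - f * ψ)‖ := by rw [hTf]; exact norm_add_le _ _
      _ ≤ max C 0 * ‖f‖ + Cl * ‖f‖ := by
          refine add_le_add ?_ ?_
          · exact (hC _ hg).trans <|
              (mul_le_mul_of_nonneg_right (le_max_left C 0) (norm_nonneg _)).trans
                (mul_le_mul_of_nonneg_left hng (le_max_right C 0))
          · exact (hCl _ hh).trans (mul_le_mul_of_nonneg_left hnh hCl0)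
      _ = (max C 0 + Cl) * ‖f‖ := by ring


lemma lemA (T : C(X,ℝ) →ₗ[ℝ] F) {W : Set X}
    (hloc : ∀ y ∈ closure W, ∃ U : Set X, IsOpen U ∧ y ∈ U ∧
      ∃ C : ℝ, ∀ f : C(X,ℝ), (∀ p ∉ U, f p = 0) → ‖T f‖ ≤ C * ‖f‖) :
    ∃ C : ℝ, 0 ≤ C ∧ ∀ f : C(X,ℝ), (∀ y ∉ W, f y = 0) → ‖T f‖ ≤ C * ‖f‖ := by
  classical
  have hK : IsCompact (closure W) := isClosed_closure.isCompact
  choose U hUo hyU C hC using hloc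
  have hQ : ∀ (y : X) (hy : y ∈ closure W), ∃ Q : Set X, IsOpen Q ∧ y ∈ Q ∧
      closure Q ⊆ U y hy := fun y hy => aux_nested (hUo y hy) (hyU y hy)
  choose Q hQo hyQ hQcl using hQ
  obtain ⟨t, ht⟩ := hK.elim_nhds_subcover' (fun y hy => Q y hy)
    (fun y hy => (hQo y hy).mem_nhds (hyQ y hy))
  set l : List (Set X × Set X) := t.toList.map (fun y => (Q y.1 y.2, U y.1 y.2)) with hl
  have hlprop : ∀ p ∈ l, closure p.1 ⊆ p.2 ∧ IsOpen p.2 ∧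
      ∃ C : ℝ, ∀ f : C(X,ℝ), (∀ y ∉ p.2, f y = 0) → ‖T f‖ ≤ C * ‖f‖ := by
    intro p hp
    rw [hl, List.mem_map] at hp
    obtain ⟨y, _, rfl⟩ := hp
    exact ⟨hQcl y.1 y.2, hUo y.1 y.2, C y.1 y.2, hC y.1 y.2⟩
  obtain ⟨C', hC'0, hC'⟩ := lemA_aux T l hlprop
  refine ⟨C', hC'0, fun f hf => ?_⟩
  refine hC' f fun y hy => ?_
  have hyW : y ∈ closure W := subset_closure (by by_contra h; exact hy (hf y h))
  have := ht hyW
  simp only [Set.mem_iUnion] at this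
  obtain ⟨z, hz, hyz⟩ := this
  exact ⟨(Q z.1 z.2, U z.1 z.2), by
    rw [hl, List.mem_map]; exact ⟨z, by simpa using hz, rfl⟩, hyz⟩


lemma lemB (T : C(X,ℝ) →ₗ[ℝ] F)
    (hdp : ∀ f g : C(X, ℝ), f * g = 0 → |T f| ⊓ |T g| = 0)
    (z : X) (Vz : Set X) (hVo : IsOpen Vz) (hzV : z ∈ Vz)
    (hbound : ∀ W : Set X, z ∉ closure W → W ⊆ Vz →
      ∃ C : ℝ, 0 ≤ C ∧ ∀ f : C(X,ℝ), (∀ y ∉ W, f y = 0) → ‖T f‖ ≤ C * ‖f‖) :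
    ∃ C : ℝ, 0 ≤ C ∧ ∀ g : C(X,ℝ), (∀ y ∉ Vz, g y = 0) →
      (∃ N : Set X, IsOpen N ∧ z ∈ N ∧ ∀ y ∈ N, g y = 0) → ‖T g‖ ≤ C * ‖g‖ := by
  classical
  by_contra hcon
  push_neg at hcon
  have hbad : ∀ C : ℝ, 0 ≤ C → ∃ g : C(X,ℝ), (∀ y ∉ Vz, g y = 0) ∧
      (∃ N : Set X, IsOpen N ∧ z ∈ N ∧ ∀ y ∈ N, g y = 0) ∧ ‖g‖ ≤ 1 ∧ C ≤ ‖T g‖ := by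
    intro C hC
    obtain ⟨g, hP, hQ, hgt⟩ := hcon C hC
    have hg0 : g ≠ 0 := by
      rintro rfl
      simp at hgt
    have hng : 0 < ‖g‖ := norm_pos_iff.2 hg0
    refine ⟨‖g‖⁻¹ • g, ?_, ?_, ?_, ?_⟩
    · intro y hy
      simp [ContinuousMap.smul_apply, hP y hy]
    · obtain ⟨N, hNo, hzN, hN⟩ := hQ
      exact ⟨N, hNo, hzN, fun y hy => by simp [ContinuousMap.smul_apply, hN y hy]⟩
    · have h1 : ‖‖g‖⁻¹ • g‖ = ‖‖g‖⁻¹‖ * ‖g‖ := norm_smul _ g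
      rw [h1, norm_inv, norm_norm, inv_mul_cancel₀ (ne_of_gt hng)]
    · rw [map_smul]
      have h1 : ‖‖g‖⁻¹ • T g‖ = ‖‖g‖⁻¹‖ * ‖T g‖ := norm_smul _ (T g)
      rw [h1, norm_inv, norm_norm]
      calc C = C * ‖g‖ * ‖g‖⁻¹ := by field_simp
        _ ≤ ‖T g‖ * ‖g‖⁻¹ := by
            refine mul_le_mul_of_nonneg_right (le_of_lt hgt) (by positivity)
        _ = ‖g‖⁻¹ * ‖T g‖ := by ring
  -- the inductive step producing humps
  have step : ∀ (k : ℕ) (N : Set X), IsOpen N → z ∈ N →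
      ∃ (h : C(X,ℝ)) (N' : Set X), IsOpen N' ∧ z ∈ N' ∧ N' ⊆ N ∧
        (∀ y, h y ≠ 0 → y ∈ N) ∧ (∀ y ∈ N', h y = 0) ∧ ‖h‖ ≤ 1 ∧
        ((k:ℝ)+1) * 2^k ≤ ‖T h‖ := by
    intro k N hNo hzN
    obtain ⟨Q, hQo, hzQ, hQcl⟩ := aux_nested (hNo.inter hVo) ⟨hzN, hzV⟩
    have hQN : Q ⊆ N := fun y hy => ((hQcl (subset_closure hy)).1)
    set W := Vz \ closure Q with hW
    have hzW : z ∉ closure W := by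
      intro hzw
      have h1 : closure W ⊆ closure (Set.univ \ Q) := closure_mono (by
        intro y hy
        exact ⟨trivial, fun hyQ => hy.2 (subset_closure hyQ)⟩)
      have h2 : closure (Set.univ \ Q) ⊆ Set.univ \ Q := by
        have : IsClosed (Set.univ \ Q) := by
          simpa [Set.diff_eq] using (isClosed_univ.inter (isClosed_compl_iff.2 hQo))
        exact this.closure_subset
      exact (h2 (h1 hzw)).2 hzQ
    obtain ⟨Cw, hCw0, hCw⟩ := hbound W hzW Set.diff_subset
    have hdisjQ : Disjoint (closure Q) ((N:Set X)ᶜ) :=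
      Set.disjoint_left.2 fun y hy hyc => hyc (hQcl hy).1
    obtain ⟨ψ, hψ0, hψ1, hψ01⟩ := aux_urysohn isClosed_closure (isClosed_compl_iff.2 hNo) hdisjQ
    obtain ⟨g, hgsupp, ⟨Ng, hNgo, hzNg, hNg⟩, hgn, hgT⟩ :=
      hbad (Cw + ((k:ℝ)+1) * 2^k) (by positivity)
    refine ⟨g * (1 - ψ), Ng ∩ Q, hNgo.inter hQo, ⟨hzNg, hzQ⟩, fun y hy => hQN hy.2,
      ?_, ?_, ?_, ?_⟩
    · intro y hy
      simp only [ContinuousMap.mul_apply, ContinuousMap.sub_apply, ContinuousMap.one_apply] at hy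
      by_contra hyN
      rw [hψ1 y hyN, sub_self, mul_zero] at hy
      exact hy rfl
    · intro y hy
      simp [ContinuousMap.mul_apply, hNg y hy.1]
    · refine cnorm_le zero_le_one fun y => ?_
      simp only [ContinuousMap.mul_apply, ContinuousMap.sub_apply, ContinuousMap.one_apply]
      rw [abs_mul]
      have h1 : |g y| ≤ 1 := by
        calc |g y| ≤ ‖g‖ := by
              simpa [Real.norm_eq_abs] using g.norm_coe_le_norm y
          _ ≤ 1 := hgn
      have h2 : |1 - ψ y| ≤ 1 := by
        rw [abs_of_nonneg (by linarith [(hψ01 y).2])]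
        linarith [(hψ01 y).1]
      calc |g y| * |1 - ψ y| ≤ 1 * 1 := mul_le_mul h1 h2 (abs_nonneg _) zero_le_one
        _ = 1 := by ring
    · -- norm of T on the hump
      have hsplit : g = g * ψ + g * (1 - ψ) := by ring
      have hgψ : ∀ y ∉ W, (g * ψ) y = 0 := by
        intro y hy
        rw [hW] at hy
        simp only [Set.mem_diff, not_and, not_not] at hy
        by_cases hyV : y ∈ Vz
        · simp [ContinuousMap.mul_apply, hψ0 y (hy hyV)]
        · simp [ContinuousMap.mul_apply, hgsupp y hyV]
      have hgψn : ‖g * ψ‖ ≤ 1 := by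
        refine cnorm_le zero_le_one fun y => ?_
        simp only [ContinuousMap.mul_apply]
        rw [abs_mul]
        have h1 : |g y| ≤ 1 :=
          le_trans (by simpa [Real.norm_eq_abs] using g.norm_coe_le_norm y) hgn
        have h2 : |ψ y| ≤ 1 := by
          rw [abs_of_nonneg (hψ01 y).1]; exact (hψ01 y).2
        calc |g y| * |ψ y| ≤ 1 * 1 := mul_le_mul h1 h2 (abs_nonneg _) zero_le_one
          _ = 1 := by ring
      have hTψ : ‖T (g * ψ)‖ ≤ Cw := by
        calc ‖T (g * ψ)‖ ≤ Cw * ‖g * ψ‖ := hCw _ hgψ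
          _ ≤ Cw * 1 := mul_le_mul_of_nonneg_left hgψn hCw0
          _ = Cw := by ring
      have hTg : T g = T (g * ψ) + T (g * (1 - ψ)) := by
        conv_lhs => rw [hsplit]
        rw [map_add]
      have := norm_add_le (T (g * ψ)) (T (g * (1-ψ)))
      rw [← hTg] at this
      linarith [hgT]
  choose hfun Nfun hNo' hzN' hNsub hsupp hvan hnorm hTnorm using step
  -- the recursively defined shrinking neighborhoods
  let seq : ℕ → {p : Set X // IsOpen p ∧ z ∈ p} := fun k =>
    Nat.rec ⟨Set.univ, isOpen_univ, trivial⟩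
      (fun k prev => ⟨Nfun k prev.1 prev.2.1 prev.2.2,
        hNo' k prev.1 prev.2.1 prev.2.2, hzN' k prev.1 prev.2.1 prev.2.2⟩) k
  let hump : ℕ → C(X,ℝ) := fun k => hfun k (seq k).1 (seq k).2.1 (seq k).2.2
  have hseq : ∀ k, (seq (k+1)).1 = Nfun k (seq k).1 (seq k).2.1 (seq k).2.2 := fun k => rfl
  have hmono : ∀ k, (seq (k+1)).1 ⊆ (seq k).1 := by
    intro k
    rw [hseq k]
    exact hNsub k (seq k).1 (seq k).2.1 (seq k).2.2
  have hchain : ∀ k l, k ≤ l → (seq l).1 ⊆ (seq k).1 := by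
    intro k l hkl
    induction l, hkl using Nat.le_induction with
    | base => exact subset_rfl
    | succ m hm ih => exact (hmono m).trans ih
  have hdisj : ∀ k l, k < l → ∀ y, hump k y * hump l y = 0 := by
    intro k l hkl y
    by_cases hy : hump l y = 0
    · rw [hy, mul_zero]
    · have hyl : y ∈ (seq l).1 := hsupp l (seq l).1 (seq l).2.1 (seq l).2.2 y hy
      have hyk1 : y ∈ (seq (k+1)).1 := hchain (k+1) l hkl hyl
      rw [hseq k] at hyk1
      rw [hvan k (seq k).1 (seq k).2.1 (seq k).2.2 y hyk1, zero_mul]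
  -- the scaled humps and their sum
  let s : ℕ → C(X,ℝ) := fun k => ((1/2 : ℝ)^k) • hump k
  have hsn : ∀ k, ‖s k‖ ≤ (1/2 : ℝ)^k := by
    intro k
    show ‖((1/2 : ℝ)^k) • hump k‖ ≤ (1/2 : ℝ)^k
    have h1 : ‖((1/2 : ℝ)^k) • hump k‖ = ‖(1/2 : ℝ)^k‖ * ‖hump k‖ := norm_smul ((1/2 : ℝ)^k) (hump k)
    rw [h1, Real.norm_eq_abs, abs_of_nonneg (by positivity : (0:ℝ) ≤ (1/2:ℝ)^k)]
    calc ((1/2:ℝ)^k) * ‖hump k‖ ≤ ((1/2:ℝ)^k) * 1 :=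
          mul_le_mul_of_nonneg_left (hnorm k (seq k).1 (seq k).2.1 (seq k).2.2) (by positivity)
      _ = (1/2:ℝ)^k := by ring
  have hsum : Summable s :=
    Summable.of_norm_bounded (summable_geometric_of_lt_one (by norm_num) (by norm_num)) hsn
  set f := ∑' k, s k with hf
  have hdisjs : ∀ k l, k ≠ l → s k * s l = 0 := by
    intro k l hkl
    ext y
    show ((1/2 : ℝ)^k • hump k) y * ((1/2 : ℝ)^l • hump l) y = 0
    simp only [ContinuousMap.smul_apply, smul_eq_mul]
    rcases lt_or_gt_of_ne hkl with h | h
    · linear_combination ((1/2:ℝ)^k * (1/2:ℝ)^l) * (hdisj k l h y)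
    · linear_combination ((1/2:ℝ)^k * (1/2:ℝ)^l) * (hdisj l k h y)
  have hmul : ∀ k, (f - s k) * s k = 0 := by
    intro k
    have h1 : f * s k = ∑' l, s l * s k := (hsum.tsum_mul_right (s k)).symm
    have h2 : (∑' l, s l * s k) = s k * s k := by
      refine tsum_eq_single k fun l hl => hdisjs l k hl
    rw [sub_mul, h1, h2, sub_self]
  have hTfb : ∀ k : ℕ, (k:ℝ) + 1 ≤ ‖T f‖ := by
    intro k
    have hd := hdp (f - s k) (s k) (hmul k)
    have := aux_norm_le_of_disj hd
    rw [← map_add] at this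
    have heq : f - s k + s k = f := by ring
    rw [heq] at this
    have hTs : ((k:ℝ)+1) ≤ ‖T (s k)‖ := by
      have hsmul : T (s k) = ((1/2:ℝ)^k) • T (hump k) := by
        show T (((1/2 : ℝ)^k) • hump k) = _
        rw [map_smul]
      have h2 : ‖((1/2:ℝ)^k) • T (hump k)‖ = ‖(1/2:ℝ)^k‖ * ‖T (hump k)‖ := norm_smul ((1/2:ℝ)^k) (T (hump k))
      rw [hsmul, h2, Real.norm_eq_abs, abs_of_nonneg (by positivity : (0:ℝ) ≤ (1/2:ℝ)^k)]
      have hT2 := hTnorm k (seq k).1 (seq k).2.1 (seq k).2.2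
      have hpow : ((1/2:ℝ))^k * 2^k = 1 := by
        rw [← mul_pow]; norm_num
      calc (k:ℝ)+1 = ((1/2:ℝ)^k) * (((k:ℝ)+1) * 2^k) := by
            linear_combination ((k:ℝ)+1) * hpow.symm
          _ ≤ ((1/2:ℝ)^k) * ‖T (hump k)‖ :=
            mul_le_mul_of_nonneg_left hT2 (by positivity)
    linarith
  obtain ⟨k, hk⟩ := exists_nat_gt ‖T f‖
  have := hTfb k
  linarith


/-- `θ` is an admissible cutoff for `g` at level `ε`, at the point `z` inside `Wz`. -/
def Adm (z : X) (Wz : Set X) (g θ : C(X,ℝ)) (ε : ℝ) : Prop :=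
  (∀ y, 0 ≤ θ y ∧ θ y ≤ 1) ∧ (∃ N : Set X, IsOpen N ∧ z ∈ N ∧ ∀ y ∈ N, θ y = 0) ∧
  (∀ y ∉ Wz, θ y = 1) ∧ ‖g - g * θ‖ ≤ ε

lemma adm_eps_nonneg {z : X} {Wz : Set X} {g θ : C(X,ℝ)} {ε : ℝ}
    (h : Adm z Wz g θ ε) : 0 ≤ ε := le_trans (norm_nonneg _) h.2.2.2

lemma adm_exists {z : X} {Wz : Set X} (hWo : IsOpen Wz) (hzW : z ∈ Wz) {g : C(X,ℝ)}
    (hg : g z = 0) {ε : ℝ} (hε : 0 < ε) {N₀ : Set X} (hN₀ : IsOpen N₀) (hzN₀ : z ∈ N₀) :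
    ∃ θ : C(X,ℝ), Adm z Wz g θ ε ∧ ∀ y, θ y ≠ 1 → y ∈ N₀ := by
  classical
  set N : Set X := {y | |g y| < ε} ∩ Wz ∩ N₀ with hN
  have hNo : IsOpen N :=
    ((isOpen_lt (continuous_abs.comp g.continuous) continuous_const).inter hWo).inter hN₀
  have hzN : z ∈ N := ⟨⟨by simp [hg, hε], hzW⟩, hzN₀⟩
  obtain ⟨Q, hQo, hzQ, hQcl⟩ := aux_nested hNo hzN
  have hdisj : Disjoint (closure Q) (Nᶜ : Set X) :=
    Set.disjoint_left.2 fun y hy hyc => hyc (hQcl hy)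
  obtain ⟨θ, hθ0, hθ1, hθ01⟩ := aux_urysohn isClosed_closure (isOpen_compl_iff.1 (by
    simpa using hNo)) hdisj
  have hsupp : ∀ y, θ y ≠ 1 → y ∈ N := by
    intro y hy
    by_contra hyN
    exact hy (hθ1 y hyN)
  refine ⟨θ, ⟨hθ01, ⟨Q, hQo, hzQ, fun y hy => hθ0 y (subset_closure hy)⟩,
    fun y hy => ?_, ?_⟩, fun y hy => ((hsupp y hy).2)⟩
  · by_contra h1
    exact hy ((hsupp y h1).1.2)
  · refine cnorm_le (le_of_lt hε) fun y => ?_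
    simp only [ContinuousMap.sub_apply, ContinuousMap.mul_apply]
    by_cases hy : θ y = 1
    · simp only [hy, mul_one, sub_self, abs_zero]
      exact le_of_lt hε
    · have hyN := hsupp y hy
      have h1 : |g y| < ε := hyN.1.1
      have h2 : |1 - θ y| ≤ 1 := by
        rw [abs_of_nonneg (by linarith [(hθ01 y).2])]
        linarith [(hθ01 y).1]
      calc |g y - g y * θ y| = |g y| * |1 - θ y| := by rw [← abs_mul]; ring_nf
        _ ≤ |g y| * 1 := mul_le_mul_of_nonneg_left h2 (abs_nonneg _)
        _ ≤ ε := by rw [mul_one]; exact le_of_lt h1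

lemma adm_diff (T : C(X,ℝ) →ₗ[ℝ] F) {z : X} {Wz Vz : Set X} {Cz : ℝ}
    (hWV : Wz ⊆ Vz) (hCz : 0 ≤ Cz)
    (hB : ∀ q : C(X,ℝ), (∀ y ∉ Vz, q y = 0) →
      (∃ N : Set X, IsOpen N ∧ z ∈ N ∧ ∀ y ∈ N, q y = 0) → ‖T q‖ ≤ Cz * ‖q‖)
    {g θ θ' : C(X,ℝ)} {ε ε' : ℝ} (h : Adm z Wz g θ ε) (h' : Adm z Wz g θ' ε') :
    ‖T (g * θ) - T (g * θ')‖ ≤ Cz * (ε + ε') := by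
  obtain ⟨hθ01, ⟨N, hNo, hzN, hN⟩, hθW, hθn⟩ := h
  obtain ⟨hθ01', ⟨N', hNo', hzN', hN'⟩, hθW', hθn'⟩ := h'
  have hq : ∀ y ∉ Vz, (g * θ - g * θ') y = 0 := by
    intro y hy
    have hyW : y ∉ Wz := fun hw => hy (hWV hw)
    simp [ContinuousMap.sub_apply, ContinuousMap.mul_apply, hθW y hyW, hθW' y hyW]
  have hqN : ∃ M : Set X, IsOpen M ∧ z ∈ M ∧ ∀ y ∈ M, (g * θ - g * θ') y = 0 := by
    refine ⟨N ∩ N', hNo.inter hNo', ⟨hzN, hzN'⟩, fun y hy => ?_⟩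
    simp [ContinuousMap.sub_apply, ContinuousMap.mul_apply, hN y hy.1, hN' y hy.2]
  have hqn : ‖g * θ - g * θ'‖ ≤ ε + ε' := by
    have hε : 0 ≤ ε := le_trans (norm_nonneg _) hθn
    have hε' : 0 ≤ ε' := le_trans (norm_nonneg _) hθn'
    refine cnorm_le (by linarith) fun y => ?_
    have e1 : |g y - g y * θ y| ≤ ε :=
      le_trans (by simpa [ContinuousMap.sub_apply, ContinuousMap.mul_apply] using
        cnorm_apply_le (g - g * θ) y) hθn
    have e2 : |g y - g y * θ' y| ≤ ε' :=
      le_trans (by simpa [ContinuousMap.sub_apply, ContinuousMap.mul_apply] using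
        cnorm_apply_le (g - g * θ') y) hθn'
    have : (g * θ - g * θ') y = (g y - g y * θ' y) - (g y - g y * θ y) := by
      simp only [ContinuousMap.sub_apply, ContinuousMap.mul_apply]; ring
    rw [this]
    calc |(g y - g y * θ' y) - (g y - g y * θ y)| ≤
        |g y - g y * θ' y| + |g y - g y * θ y| := abs_sub _ _
      _ ≤ ε + ε' := by linarith
  calc ‖T (g * θ) - T (g * θ')‖ = ‖T (g * θ - g * θ')‖ := by rw [map_sub]
    _ ≤ Cz * ‖g * θ - g * θ'‖ := hB _ hq hqN
    _ ≤ Cz * (ε + ε') := mul_le_mul_of_nonneg_left hqn hCz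

lemma cval_exists (T : C(X,ℝ) →ₗ[ℝ] F) {z : X} {Wz Vz : Set X} {Cz : ℝ}
    (hWo : IsOpen Wz) (hzW : z ∈ Wz) (hWV : Wz ⊆ Vz) (hCz : 0 ≤ Cz)
    (hB : ∀ q : C(X,ℝ), (∀ y ∉ Vz, q y = 0) →
      (∃ N : Set X, IsOpen N ∧ z ∈ N ∧ ∀ y ∈ N, q y = 0) → ‖T q‖ ≤ Cz * ‖q‖)
    {g : C(X,ℝ)} (hg : g z = 0) :
    ∃ v : F, ∀ (ε : ℝ) (θ : C(X,ℝ)), Adm z Wz g θ ε → ‖T (g * θ) - v‖ ≤ Cz * ε := by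
  classical
  have hex : ∀ k : ℕ, ∃ θ : C(X,ℝ), Adm z Wz g θ (1/((k:ℝ)+1)) := fun k => by
    obtain ⟨θ, hθ, _⟩ := adm_exists hWo hzW hg
      (by positivity : (0:ℝ) < 1/((k:ℝ)+1)) isOpen_univ (Set.mem_univ z)
    exact ⟨θ, hθ⟩
  choose θs hθs using hex
  set u : ℕ → F := fun k => T (g * θs k) with hu
  have hcauchy : CauchySeq u := by
    refine cauchySeq_of_le_tendsto_0 (fun N => Cz * (2/((N:ℝ)+1))) (fun m k N hm hk => ?_) ?_
    · rw [dist_eq_norm]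
      calc ‖u m - u k‖ ≤ Cz * (1/((m:ℝ)+1) + 1/((k:ℝ)+1)) :=
            adm_diff T hWV hCz hB (hθs m) (hθs k)
        _ ≤ Cz * (2/((N:ℝ)+1)) := by
            refine mul_le_mul_of_nonneg_left ?_ hCz
            have h1 : 1/((m:ℝ)+1) ≤ 1/((N:ℝ)+1) := by
              apply one_div_le_one_div_of_le (by positivity)
              have : (N:ℝ) ≤ (m:ℝ) := Nat.cast_le.2 hm
              linarith
            have h2 : 1/((k:ℝ)+1) ≤ 1/((N:ℝ)+1) := by
              apply one_div_le_one_div_of_le (by positivity)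
              have : (N:ℝ) ≤ (k:ℝ) := Nat.cast_le.2 hk
              linarith
            have : (2:ℝ)/((N:ℝ)+1) = 1/((N:ℝ)+1) + 1/((N:ℝ)+1) := by ring
            linarith
    · have h1 : Tendsto (fun N : ℕ => 1/((N:ℝ)+1)) atTop (𝓝 0) :=
        tendsto_one_div_add_atTop_nhds_zero_nat
      have := (h1.const_mul (2*Cz))
      simp only [mul_zero] at this
      convert this using 2 with N
      ring
  obtain ⟨v, hv⟩ := cauchySeq_tendsto_of_complete hcauchy
  refine ⟨v, fun ε θ hθ => ?_⟩
  have hεn : 0 ≤ ε := adm_eps_nonneg hθ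
  have hlim : Tendsto (fun k => ‖T (g * θ) - u k‖) atTop (𝓝 ‖T (g * θ) - v‖) :=
    (tendsto_const_nhds.sub hv).norm
  have hbd : ∀ k : ℕ, ‖T (g * θ) - u k‖ ≤ Cz * ε + Cz * (1/((k:ℝ)+1)) := fun k => by
    calc ‖T (g * θ) - u k‖ ≤ Cz * (ε + 1/((k:ℝ)+1)) := adm_diff T hWV hCz hB hθ (hθs k)
      _ = Cz * ε + Cz * (1/((k:ℝ)+1)) := by ring
  have hlim2 : Tendsto (fun k : ℕ => Cz * ε + Cz * (1/((k:ℝ)+1))) atTop (𝓝 (Cz * ε)) := by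
    have h1 : Tendsto (fun k : ℕ => 1/((k:ℝ)+1)) atTop (𝓝 0) :=
      tendsto_one_div_add_atTop_nhds_zero_nat
    have := (h1.const_mul Cz).const_add (Cz * ε)
    simpa using this
  exact le_of_tendsto_of_tendsto' hlim hlim2 hbd

lemma cval_tendsto (T : C(X,ℝ) →ₗ[ℝ] F) {z : X} {Wz : Set X} {Cz : ℝ} {g : C(X,ℝ)} {v : F}
    (hv : ∀ (ε : ℝ) (θ : C(X,ℝ)), Adm z Wz g θ ε → ‖T (g * θ) - v‖ ≤ Cz * ε)
    {θs : ℕ → C(X,ℝ)} {εs : ℕ → ℝ} (hadm : ∀ k, Adm z Wz g (θs k) (εs k))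
    (hε : Tendsto εs atTop (𝓝 0)) :
    Tendsto (fun k => T (g * θs k)) atTop (𝓝 v) := by
  have h0 : Tendsto (fun k => T (g * θs k) - v) atTop (𝓝 0) := by
    refine squeeze_zero_norm (fun k => hv (εs k) (θs k) (hadm k)) ?_
    have := hε.const_mul Cz
    simpa using this
  have := h0.add_const v
  simpa using this

/-- Bade–Curtis type structure theorem: if the singularity set of the disjointness
preserving operator `T` is the nonempty finite set `{x 1, …, x n}`, then
`T = R + S₁ + ⋯ + Sₙ` with `R` continuous disjointness preserving and each `Sᵢ`
disjointness preserving, vanishing on `J_{x i}` but not identically on `M_{x i}`. -/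
theorem bade_curtis_structure (T : C(X, ℝ) →ₗ[ℝ] F)
    (hdp : ∀ f g : C(X, ℝ), f * g = 0 → |T f| ⊓ |T g| = 0)
    (n : ℕ) (hn : 0 < n) (x : Fin n → X) (hinj : Function.Injective x)
    (hsing : SingSet T = Set.range x) :
    ∃ (R : C(X, ℝ) →ₗ[ℝ] F) (S : Fin n → (C(X, ℝ) →ₗ[ℝ] F)),
      Continuous R ∧
      (∀ f g : C(X, ℝ), f * g = 0 → |R f| ⊓ |R g| = 0) ∧
      (∀ i, ∀ f g : C(X, ℝ), f * g = 0 → |S i f| ⊓ |S i g| = 0) ∧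
      T = R + ∑ i, S i ∧
      (∀ i, ∀ f : C(X, ℝ),
        (∃ U : Set X, IsOpen U ∧ x i ∈ U ∧ ∀ y ∈ U, f y = 0) → S i f = 0) ∧
      (∀ i, ∃ f : C(X, ℝ), f (x i) = 0 ∧ S i f ≠ 0) := by
  classical
  -- ### pairwise disjoint open neighborhoods
  have hpair : ∀ i j : Fin n, i ≠ j → ∃ A : Set X × Set X, IsOpen A.1 ∧ IsOpen A.2 ∧
      x i ∈ A.1 ∧ x j ∈ A.2 ∧ Disjoint A.1 A.2 := by
    intro i j hij
    obtain ⟨A, B, hA, hB, hxA, hxB, hAB⟩ := t2_separation (fun h => hij (hinj h))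
    exact ⟨(A, B), hA, hB, hxA, hxB, hAB⟩
  choose! P hP1 hP2 hP3 hP4 hP5 using hpair
  set U : Fin n → Set X := fun i => ⋂ j ∈ Finset.univ.erase i, ((P i j).1 ∩ (P j i).2)
    with hUdef
  have hUo : ∀ i, IsOpen (U i) := by
    intro i
    refine isOpen_biInter_finset fun j hj => ?_
    have hji : j ≠ i := (Finset.mem_erase.1 hj).1
    exact (hP1 i j (Ne.symm hji)).inter (hP2 j i hji)
  have hxU : ∀ i, x i ∈ U i := by
    intro i
    refine Set.mem_iInter₂.2 fun j hj => ?_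
    have hji : j ≠ i := (Finset.mem_erase.1 hj).1
    exact ⟨hP3 i j (Ne.symm hji), hP4 j i hji⟩
  have hUdisj : ∀ i j, i ≠ j → Disjoint (U i) (U j) := by
    intro i j hij
    have h1 : U i ⊆ (P i j).1 := by
      intro y hy
      have := Set.mem_iInter₂.1 hy j (Finset.mem_erase.2 ⟨Ne.symm hij, Finset.mem_univ j⟩)
      exact this.1
    have h2 : U j ⊆ (P i j).2 := by
      intro y hy
      have := Set.mem_iInter₂.1 hy i (Finset.mem_erase.2 ⟨hij, Finset.mem_univ i⟩)
      exact this.2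
    exact (hP5 i j hij).mono h1 h2
  -- ### shrunk neighborhoods V, W and plateaus σ
  have hVex : ∀ i, ∃ V : Set X, IsOpen V ∧ x i ∈ V ∧ closure V ⊆ U i :=
    fun i => aux_nested (hUo i) (hxU i)
  choose V hVo hxV hVcl using hVex
  have hWex : ∀ i, ∃ Wi : Set X, IsOpen Wi ∧ x i ∈ Wi ∧ closure Wi ⊆ V i :=
    fun i => aux_nested (hVo i) (hxV i)
  choose W hWo hxW hWcl using hWex
  have hWV : ∀ i, W i ⊆ V i := fun i => subset_closure.trans (hWcl i)
  have hVU : ∀ i, V i ⊆ U i := fun i => subset_closure.trans (hVcl i)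
  have hVdisj : ∀ i j, i ≠ j → Disjoint (V i) (V j) :=
    fun i j hij => (hUdisj i j hij).mono (hVU i) (hVU j)
  have hWdisj : ∀ i j, i ≠ j → Disjoint (W i) (W j) :=
    fun i j hij => (hVdisj i j hij).mono (hWV i) (hWV j)
  have hσex : ∀ i, ∃ σ : C(X,ℝ), (∀ y ∈ (V i)ᶜ, σ y = 0) ∧ (∀ y ∈ closure (W i), σ y = 1) ∧
      ∀ y, 0 ≤ σ y ∧ σ y ≤ 1 := by
    intro i
    refine aux_urysohn (isClosed_compl_iff.2 (hVo i)) isClosed_closure ?_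
    exact Set.disjoint_left.2 fun y hy hyc => hy (hWcl i hyc)
  choose σ hσ0' hσ1 hσ01 using hσex
  have hσ0 : ∀ i y, y ∉ V i → σ i y = 0 := fun i y hy => hσ0' i y hy
  have hσat : ∀ i, σ i (x i) = 1 := fun i => hσ1 i _ (subset_closure (hxW i))
  -- ### local boundedness off the singularity set
  have hnotsing : ∀ y : X, (∀ i, y ≠ x i) → ∃ U' : Set X, IsOpen U' ∧ y ∈ U' ∧
      ∃ C : ℝ, ∀ f : C(X,ℝ), (∀ p ∉ U', f p = 0) → ‖T f‖ ≤ C * ‖f‖ := by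
    intro y hy
    have hns : y ∉ SingSet T := by
      rw [hsing]
      rintro ⟨i, rfl⟩
      exact hy i rfl
    simp only [SingSet, Set.mem_setOf_eq] at hns
    push_neg at hns
    obtain ⟨U', hU'o, hyU', C, hC⟩ := hns
    exact ⟨U', hU'o, hyU', C, fun f hf => hC f hf⟩
  have hlemA : ∀ Wst : Set X, (∀ i, x i ∉ closure Wst) →
      ∃ C : ℝ, 0 ≤ C ∧ ∀ f : C(X,ℝ), (∀ y ∉ Wst, f y = 0) → ‖T f‖ ≤ C * ‖f‖ := by
    intro Wst hW
    refine lemA T (fun y hy => hnotsing y (fun i hyx => hW i (hyx ▸ hy)))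
  have hCzex : ∀ i, ∃ C : ℝ, 0 ≤ C ∧ ∀ g : C(X,ℝ), (∀ y ∉ V i, g y = 0) →
      (∃ N : Set X, IsOpen N ∧ x i ∈ N ∧ ∀ y ∈ N, g y = 0) → ‖T g‖ ≤ C * ‖g‖ := by
    intro i
    refine lemB T hdp (x i) (V i) (hVo i) (hxV i) (fun Wst hzW hWV' => hlemA Wst (fun j => ?_))
    by_cases hj : j = i
    · subst hj; exact hzW
    · intro hmem
      have h1 : x j ∈ U i := hVcl i ((closure_mono hWV') hmem)
      exact Set.disjoint_left.1 (hUdisj i j (fun h => hj (h ▸ rfl))) h1 (hxU j)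
  choose Cz hCz0 hCzB using hCzex
  -- ### the singular limit values
  have hcvex : ∀ (i : Fin n) (g : C(X,ℝ)), ∃ v : F, g (x i) = 0 →
      ∀ (ε : ℝ) (θ : C(X,ℝ)), Adm (x i) (W i) g θ ε → ‖T (g * θ) - v‖ ≤ Cz i * ε := by
    intro i g
    by_cases hg : g (x i) = 0
    · obtain ⟨v, hv⟩ := cval_exists T (hWo i) (hxW i) (hWV i) (hCz0 i) (hCzB i) hg
      exact ⟨v, fun _ => hv⟩
    · exact ⟨0, fun hg' => absurd hg' hg⟩
  choose cv hcv using hcvex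
  set fbar : Fin n → C(X,ℝ) → C(X,ℝ) := fun i f => f - f (x i) • σ i with hfbardef
  have hfbar0 : ∀ i f, (fbar i f) (x i) = 0 := by
    intro i f
    simp [hfbardef, ContinuousMap.sub_apply, ContinuousMap.smul_apply, hσat i]
  have hSlim : ∀ (i : Fin n) (g : C(X,ℝ)), g (x i) = 0 → ∀ (θs : ℕ → C(X,ℝ)) (εs : ℕ → ℝ),
      (∀ k, Adm (x i) (W i) g (θs k) (εs k)) → Tendsto εs atTop (𝓝 0) →
      Tendsto (fun k => T (g * θs k)) atTop (𝓝 (cv i g)) :=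
    fun i g hg θs εs hadm hε => cval_tendsto T (hcv i g hg) hadm hε
  have εs0 : Tendsto (fun k : ℕ => 1/((k:ℝ)+1)) atTop (𝓝 0) :=
    tendsto_one_div_add_atTop_nhds_zero_nat
  have hεpos : ∀ k : ℕ, (0:ℝ) < 1/((k:ℝ)+1) := fun k => by positivity
  have hcanon : ∀ (i : Fin n) (g : C(X,ℝ)), g (x i) = 0 → ∃ θs : ℕ → C(X,ℝ),
      ∀ k, Adm (x i) (W i) g (θs k) (1/((k:ℝ)+1)) := by
    intro i g hg
    have := fun k : ℕ => adm_exists (hWo i) (hxW i) hg (hεpos k) isOpen_univ (Set.mem_univ (x i))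
    choose θs hθs _ using this
    exact ⟨θs, hθs⟩
  -- ### additivity and homogeneity of cv
  have hcv_add : ∀ (i : Fin n) (g h : C(X,ℝ)), g (x i) = 0 → h (x i) = 0 →
      cv i (g + h) = cv i g + cv i h := by
    intro i g h hg hh
    have hex : ∀ k : ℕ, ∃ θ : C(X,ℝ), Adm (x i) (W i) g θ (1/((k:ℝ)+1)) ∧
        Adm (x i) (W i) h θ (1/((k:ℝ)+1)) := by
      intro k
      have hNo : IsOpen {y : X | |h y| < 1/((k:ℝ)+1)} :=
        isOpen_lt (continuous_abs.comp h.continuous) continuous_const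
      have hzN : x i ∈ {y : X | |h y| < 1/((k:ℝ)+1)} := by
        simp only [Set.mem_setOf_eq, hh, abs_zero]
        exact hεpos k
      obtain ⟨θ, hθ, hsup⟩ := adm_exists (hWo i) (hxW i) hg (hεpos k) hNo hzN
      refine ⟨θ, hθ, hθ.1, hθ.2.1, hθ.2.2.1, ?_⟩
      refine cnorm_le (le_of_lt (hεpos k)) fun y => ?_
      simp only [ContinuousMap.sub_apply, ContinuousMap.mul_apply]
      by_cases hy : θ y = 1
      · simp only [hy, mul_one, sub_self, abs_zero]
        exact le_of_lt (hεpos k)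
      · have h1 : |h y| < 1/((k:ℝ)+1) := hsup y hy
        have h2 : |1 - θ y| ≤ 1 := by
          rw [abs_of_nonneg (by linarith [(hθ.1 y).2])]
          linarith [(hθ.1 y).1]
        calc |h y - h y * θ y| = |h y| * |1 - θ y| := by rw [← abs_mul]; ring_nf
          _ ≤ |h y| * 1 := mul_le_mul_of_nonneg_left h2 (abs_nonneg _)
          _ ≤ 1/((k:ℝ)+1) := by rw [mul_one]; exact le_of_lt h1
    choose θs hθs1 hθs2 using hex
    have h1 : Tendsto (fun k => T (g * θs k)) atTop (𝓝 (cv i g)) :=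
      hSlim i g hg θs _ hθs1 εs0
    have h2 : Tendsto (fun k => T (h * θs k)) atTop (𝓝 (cv i h)) :=
      hSlim i h hh θs _ hθs2 εs0
    have h3 : Tendsto (fun k => T ((g + h) * θs k)) atTop (𝓝 (cv i (g + h))) := by
      refine hSlim i (g + h) (by simp [ContinuousMap.add_apply, hg, hh]) θs
        (fun k => 2/((k:ℝ)+1)) (fun k => ?_) ?_
      · obtain ⟨a1, a2, a3, a4⟩ := hθs1 k
        obtain ⟨b1, b2, b3, b4⟩ := hθs2 k
        refine ⟨a1, a2, a3, ?_⟩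
        have heq : (g + h) - (g + h) * θs k = (g - g * θs k) + (h - h * θs k) := by ring
        rw [heq]
        calc ‖(g - g * θs k) + (h - h * θs k)‖ ≤ ‖g - g * θs k‖ + ‖h - h * θs k‖ :=
              norm_add_le _ _
          _ ≤ 1/((k:ℝ)+1) + 1/((k:ℝ)+1) := add_le_add a4 b4
          _ = 2/((k:ℝ)+1) := by ring
      · have := εs0.const_mul (2:ℝ)
        simp only [mul_zero] at this
        convert this using 2 with k
        ring
    have h4 : Tendsto (fun k => T ((g + h) * θs k)) atTop (𝓝 (cv i g + cv i h)) := by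
      have heq : ∀ k, T ((g + h) * θs k) = T (g * θs k) + T (h * θs k) := by
        intro k
        rw [← map_add]
        congr 1
        ring
      simp only [heq]
      exact h1.add h2
    exact tendsto_nhds_unique h3 h4
  have hcv_smul : ∀ (i : Fin n) (c : ℝ) (g : C(X,ℝ)), g (x i) = 0 →
      cv i (c • g) = c • cv i g := by
    intro i c g hg
    obtain ⟨θs, hθs⟩ := hcanon i g hg
    have h1 : Tendsto (fun k => T (g * θs k)) atTop (𝓝 (cv i g)) := hSlim i g hg θs _ hθs εs0
    have h2 : Tendsto (fun k => T ((c • g) * θs k)) atTop (𝓝 (cv i (c • g))) := by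
      refine hSlim i (c • g) (by simp [ContinuousMap.smul_apply, hg]) θs
        (fun k => |c| * (1/((k:ℝ)+1))) (fun k => ?_) ?_
      · obtain ⟨a1, a2, a3, a4⟩ := hθs k
        refine ⟨a1, a2, a3, ?_⟩
        have heq : (c • g) - (c • g) * θs k = c • (g - g * θs k) := by
          rw [smul_mul_assoc, ← smul_sub]
        rw [heq]
        have hn : ‖c • (g - g * θs k)‖ = ‖c‖ * ‖g - g * θs k‖ := by
          exact norm_smul c (g - g * θs k)
        rw [hn, Real.norm_eq_abs]
        exact mul_le_mul_of_nonneg_left a4 (abs_nonneg c)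
      · have := εs0.const_mul |c|
        simpa using this
    have h3 : Tendsto (fun k => T ((c • g) * θs k)) atTop (𝓝 (c • cv i g)) := by
      have heq : ∀ k, T ((c • g) * θs k) = c • T (g * θs k) := by
        intro k
        rw [smul_mul_assoc, map_smul]
      simp only [heq]
      exact h1.const_smul c
    exact tendsto_nhds_unique h2 h3
  -- ### the singular operators S i
  set SL : Fin n → (C(X,ℝ) →ₗ[ℝ] F) := fun i =>
    { toFun := fun f => T (fbar i f) - cv i (fbar i f)
      map_add' := by
        intro f g
        have hb : fbar i (f + g) = fbar i f + fbar i g := by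
          simp only [hfbardef]
          ext y
          simp only [ContinuousMap.add_apply, ContinuousMap.sub_apply,
            ContinuousMap.smul_apply, smul_eq_mul]
          ring
        rw [hb, map_add, hcv_add i _ _ (hfbar0 i f) (hfbar0 i g)]
        abel
      map_smul' := by
        intro c f
        have hb : fbar i (c • f) = c • fbar i f := by
          simp only [hfbardef]
          ext y
          simp only [ContinuousMap.smul_apply, ContinuousMap.sub_apply, smul_eq_mul]
          ring
        rw [hb, map_smul, hcv_smul i c _ (hfbar0 i f), RingHom.id_apply, smul_sub] }
    with hSLdef
  have hSLapp : ∀ i f, SL i f = T (fbar i f) - cv i (fbar i f) := fun i f => rfl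
  -- ### S i vanishes on functions vanishing near x i
  have hS5 : ∀ (i : Fin n) (f : C(X,ℝ)),
      (∃ U' : Set X, IsOpen U' ∧ x i ∈ U' ∧ ∀ y ∈ U', f y = 0) → SL i f = 0 := by
    intro i f ⟨N, hNo, hxN, hfN⟩
    have hf0 : f (x i) = 0 := hfN _ hxN
    have hfb : fbar i f = f := by
      simp [hfbardef, hf0]
    rw [hSLapp, hfb]
    obtain ⟨θ, hθ, hsup⟩ := adm_exists (hWo i) (hxW i) hf0 one_pos hNo hxN
    have hfθ : f - f * θ = 0 := by
      ext y
      simp only [ContinuousMap.sub_apply, ContinuousMap.mul_apply, ContinuousMap.zero_apply]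
      by_cases hy : θ y = 1
      · rw [hy, mul_one, sub_self]
      · rw [hfN y (hsup y hy)]
        ring
    have hadm0 : Adm (x i) (W i) f θ 0 := by
      refine ⟨hθ.1, hθ.2.1, hθ.2.2.1, ?_⟩
      rw [hfθ, norm_zero]
    have hle := hcv i f hf0 0 θ hadm0
    rw [mul_zero] at hle
    have heq : T (f * θ) = cv i f := by
      have := le_antisymm hle (norm_nonneg _)
      rwa [norm_eq_zero, sub_eq_zero] at this
    have hfθ' : f = f * θ := sub_eq_zero.1 hfθ
    rw [sub_eq_zero, ← heq]
    exact congrArg T hfθ'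
  -- ### disjointness preservation of the S i
  have hS3 : ∀ (i : Fin n) (f g : C(X,ℝ)), f * g = 0 → |SL i f| ⊓ |SL i g| = 0 := by
    intro i f g hfg
    have hpt : ∀ y, f y * g y = 0 := by
      intro y
      have := congrArg (fun h : C(X,ℝ) => h y) hfg
      simpa [ContinuousMap.mul_apply] using this
    by_cases hf0 : f (x i) = 0
    · by_cases hg0 : g (x i) = 0
      · -- both vanish at x i
        have hfb : fbar i f = f := by simp [hfbardef, hf0]
        have hgb : fbar i g = g := by simp [hfbardef, hg0]
        obtain ⟨θs, hθs⟩ := hcanon i f hf0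
        obtain ⟨ηs, hηs⟩ := hcanon i g hg0
        have h1 : Tendsto (fun k => T (f - f * θs k)) atTop (𝓝 (SL i f)) := by
          have hlim := hSlim i f hf0 θs _ hθs εs0
          have heq : ∀ k, T (f - f * θs k) = T f - T (f * θs k) := fun k => map_sub T _ _
          simp only [heq, hSLapp, hfb]
          exact tendsto_const_nhds.sub hlim
        have h2 : Tendsto (fun k => T (g - g * ηs k)) atTop (𝓝 (SL i g)) := by
          have hlim := hSlim i g hg0 ηs _ hηs εs0
          have heq : ∀ k, T (g - g * ηs k) = T g - T (g * ηs k) := fun k => map_sub T _ _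
          simp only [heq, hSLapp, hgb]
          exact tendsto_const_nhds.sub hlim
        refine aux_tendsto_inf_abs h1 h2 (fun k => hdp _ _ ?_)
        ext y
        simp only [ContinuousMap.mul_apply, ContinuousMap.sub_apply, ContinuousMap.zero_apply]
        linear_combination ((1 - θs k y) * (1 - ηs k y)) * hpt y
      · -- g (x i) ≠ 0 : f vanishes near x i
        have hSf : SL i f = 0 := by
          refine hS5 i f ⟨{y | g y ≠ 0}, ?_, hg0, fun y hy => ?_⟩
          · exact isOpen_ne_fun g.continuous continuous_const
          · by_contra hfy
            exact hy (by
              have := hpt y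
              rcases mul_eq_zero.1 this with h | h
              · exact absurd h hfy
              · exact h)
        rw [hSf, abs_zero]
        exact inf_eq_left.2 (abs_nonneg _)
    · -- f (x i) ≠ 0 : g vanishes near x i
      have hSg : SL i g = 0 := by
        refine hS5 i g ⟨{y | f y ≠ 0}, ?_, hf0, fun y hy => ?_⟩
        · exact isOpen_ne_fun f.continuous continuous_const
        · by_contra hgy
          exact hgy (by
            have := hpt y
            rcases mul_eq_zero.1 this with h | h
            · exact absurd h hy
            · exact h)
      rw [hSg, abs_zero]
      exact inf_eq_right.2 (abs_nonneg _)
  -- ### nontriviality of S i on M_{x i}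
  have hσnorm : ∀ i, ‖σ i‖ ≤ 1 := fun i => cnorm_le zero_le_one fun y => by
    rw [abs_of_nonneg (hσ01 i y).1]
    exact (hσ01 i y).2
  have hS6 : ∀ i, ∃ f : C(X,ℝ), f (x i) = 0 ∧ SL i f ≠ 0 := by
    intro i
    by_contra hc
    push_neg at hc
    have hTg : ∀ g : C(X,ℝ), g (x i) = 0 → T g = cv i g := by
      intro g hg
      have hfb : fbar i g = g := by simp [hfbardef, hg]
      have := hc g hg
      rw [hSLapp, hfb] at this
      exact sub_eq_zero.1 this
    have hbound : ∀ f ∈ KU (W i), ‖T f‖ ≤ (2 * Cz i + ‖T (σ i)‖) * ‖f‖ := by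
      intro f hf
      have hf' : ∀ y ∉ W i, f y = 0 := hf
      set g := fbar i f with hgdef
      have hg0 : g (x i) = 0 := hfbar0 i f
      have hgnorm : ‖g‖ ≤ 2 * ‖f‖ := by
        refine cnorm_le (by positivity) fun y => ?_
        have : g y = f y - f (x i) * σ i y := by
          simp [hgdef, hfbardef, ContinuousMap.sub_apply, ContinuousMap.smul_apply]
        rw [this]
        have e1 : |f y| ≤ ‖f‖ := cnorm_apply_le f y
        have e2 : |f (x i)| ≤ ‖f‖ := cnorm_apply_le f (x i)
        have e3 : |σ i y| ≤ 1 := by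
          rw [abs_of_nonneg (hσ01 i y).1]; exact (hσ01 i y).2
        calc |f y - f (x i) * σ i y| ≤ |f y| + |f (x i) * σ i y| := abs_sub _ _
          _ = |f y| + |f (x i)| * |σ i y| := by rw [abs_mul]
          _ ≤ ‖f‖ + ‖f‖ * 1 := add_le_add e1
              (mul_le_mul e2 e3 (abs_nonneg _) (norm_nonneg f))
          _ = 2 * ‖f‖ := by ring
      obtain ⟨θs, hθs⟩ := hcanon i g hg0
      have hlim := hSlim i g hg0 θs _ hθs εs0
      have hbk : ∀ k, ‖T (g * θs k)‖ ≤ Cz i * (2 * ‖f‖) := by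
        intro k
        have hsupp : ∀ y ∉ V i, (g * θs k) y = 0 := by
          intro y hy
          have hyW : y ∉ W i := fun hw => hy (hWV i hw)
          have h1 : f y = 0 := hf' y hyW
          have h2 : σ i y = 0 := hσ0 i y hy
          simp [hgdef, hfbardef, ContinuousMap.mul_apply, ContinuousMap.sub_apply,
            ContinuousMap.smul_apply, h1, h2]
        have hvan : ∃ N : Set X, IsOpen N ∧ x i ∈ N ∧ ∀ y ∈ N, (g * θs k) y = 0 := by
          obtain ⟨N, hNo, hxN, hN⟩ := (hθs k).2.1
          exact ⟨N, hNo, hxN, fun y hy => by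
            simp [ContinuousMap.mul_apply, hN y hy]⟩
        have h1 := hCzB i (g * θs k) hsupp hvan
        have hng : ‖g * θs k‖ ≤ 2 * ‖f‖ := by
          refine cnorm_le (by positivity) fun y => ?_
          rw [ContinuousMap.mul_apply, abs_mul]
          have e1 : |g y| ≤ 2 * ‖f‖ := le_trans (cnorm_apply_le g y) hgnorm
          have e2 : |θs k y| ≤ 1 := by
            rw [abs_of_nonneg ((hθs k).1 y).1]; exact ((hθs k).1 y).2
          calc |g y| * |θs k y| ≤ (2 * ‖f‖) * 1 :=
                mul_le_mul e1 e2 (abs_nonneg _) (by positivity)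
            _ = 2 * ‖f‖ := by ring
        calc ‖T (g * θs k)‖ ≤ Cz i * ‖g * θs k‖ := h1
          _ ≤ Cz i * (2 * ‖f‖) := mul_le_mul_of_nonneg_left hng (hCz0 i)
      have h2 : ‖T g‖ ≤ Cz i * (2 * ‖f‖) := by
        have hTgcv : Tendsto (fun k => ‖T (g * θs k)‖) atTop (𝓝 ‖T g‖) := by
          rw [hTg g hg0]
          exact hlim.norm
        exact le_of_tendsto hTgcv (Eventually.of_forall hbk)
      have hsplit : T f = T g + f (x i) • T (σ i) := by
        have : f = g + f (x i) • σ i := by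
          simp [hgdef, hfbardef]
        conv_lhs => rw [this]
        rw [map_add, map_smul]
      rw [hsplit]
      have e2 : ‖f (x i) • T (σ i)‖ = |f (x i)| * ‖T (σ i)‖ := by
        have := norm_smul (f (x i)) (T (σ i))
        rwa [Real.norm_eq_abs] at this
      calc ‖T g + f (x i) • T (σ i)‖ ≤ ‖T g‖ + ‖f (x i) • T (σ i)‖ := norm_add_le _ _
        _ ≤ Cz i * (2 * ‖f‖) + |f (x i)| * ‖T (σ i)‖ := by
            rw [e2]; exact add_le_add h2 le_rfl
        _ ≤ Cz i * (2 * ‖f‖) + ‖f‖ * ‖T (σ i)‖ := by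
            refine add_le_add le_rfl (mul_le_mul_of_nonneg_right (cnorm_apply_le f (x i))
              (norm_nonneg _))
        _ = (2 * Cz i + ‖T (σ i)‖) * ‖f‖ := by ring
    have hx_sing : x i ∈ SingSet T := by
      rw [hsing]; exact Set.mem_range_self i
    exact hx_sing (W i) (hWo i) (hxW i) ⟨2 * Cz i + ‖T (σ i)‖, hbound⟩
  -- ### the regular part R
  set R : C(X,ℝ) →ₗ[ℝ] F := T - ∑ i, SL i with hRdef
  have hRapp : ∀ f, R f = T f - ∑ i, (T (fbar i f) - cv i (fbar i f)) := by
    intro f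
    rw [hRdef]
    simp only [LinearMap.sub_apply, LinearMap.coe_sum, Finset.sum_apply]
    congr 1
  -- representation of R f as a limit
  have hRrep : ∀ (f : C(X,ℝ)) (θ : Fin n → ℕ → C(X,ℝ)) (ε : Fin n → ℕ → ℝ),
      (∀ i k, Adm (x i) (W i) (fbar i f) (θ i k) (ε i k)) →
      (∀ i, Tendsto (ε i) atTop (𝓝 0)) →
      Tendsto (fun k => T (f - ∑ i, fbar i f * (1 - θ i k))) atTop (𝓝 (R f)) := by
    intro f θ ε hadm hε
    have hterm : ∀ i, Tendsto (fun k => T (fbar i f * θ i k)) atTop (𝓝 (cv i (fbar i f))) :=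
      fun i => hSlim i _ (hfbar0 i f) (θ i) (ε i) (fun k => hadm i k) (hε i)
    have heq : ∀ k, T (f - ∑ i, fbar i f * (1 - θ i k)) =
        T f - ∑ i, (T (fbar i f) - T (fbar i f * θ i k)) := by
      intro k
      rw [map_sub]
      congr 1
      rw [map_sum]
      refine Finset.sum_congr rfl fun i _ => ?_
      rw [← map_sub]
      congr 1
      ring
    rw [hRapp]
    simp only [heq]
    exact tendsto_const_nhds.sub (tendsto_finset_sum _
      (fun i _ => tendsto_const_nhds.sub (hterm i)))
  -- pointwise facts about admissible cutoffs
  have hθW : ∀ (i : Fin n) {g θ : C(X,ℝ)} {ε : ℝ}, Adm (x i) (W i) g θ ε →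
      ∀ y, θ y ≠ 1 → y ∈ W i := by
    intro i g θ ε hθ y hy
    by_contra hyW
    exact hy (hθ.2.2.1 y hyW)
  have hσWi : ∀ (i : Fin n) (y : X), y ∈ W i → σ i y = 1 :=
    fun i y hy => hσ1 i y (subset_closure hy)
  have hσWj : ∀ (i j : Fin n) (y : X), y ∈ W i → j ≠ i → σ j y = 0 := by
    intro i j y hy hj
    refine hσ0 j y (fun hyV => ?_)
    exact Set.disjoint_left.1 (hVdisj j i hj) hyV (hWV i hy)
  -- evaluation of the approximants
  have hFeval : ∀ (f : C(X,ℝ)) (θ : Fin n → ℕ → C(X,ℝ)) (ε : Fin n → ℕ → ℝ)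
      (hadm : ∀ i k, Adm (x i) (W i) (fbar i f) (θ i k) (ε i k)) (k : ℕ) (y : X),
      ((∀ i, θ i k y = 1) → (f - ∑ i, fbar i f * (1 - θ i k)) y = f y) ∧
      (∀ i, y ∈ W i →
        (f - ∑ i, fbar i f * (1 - θ i k)) y
          = f y * θ i k y + f (x i) * (1 - θ i k y)) := by
    intro f θ ε hadm k y
    have happ : (f - ∑ i, fbar i f * (1 - θ i k)) y
        = f y - ∑ i, (fbar i f) y * (1 - θ i k y) := by
      simp [ContinuousMap.sub_apply, ContinuousMap.mul_apply, ContinuousMap.one_apply]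
    constructor
    · intro h1
      rw [happ]
      have : ∀ i : Fin n, (fbar i f) y * (1 - θ i k y) = 0 := by
        intro i
        rw [h1 i, sub_self, mul_zero]
      rw [Finset.sum_congr rfl (fun i _ => this i), Finset.sum_const_zero, sub_zero]
    · intro i hyW
      rw [happ]
      have hsum : ∑ j, (fbar j f) y * (1 - θ j k y) = (fbar i f) y * (1 - θ i k y) := by
        refine Finset.sum_eq_single i (fun j _ hj => ?_) (fun h => absurd (Finset.mem_univ i) h)
        have : θ j k y = 1 := by
          by_contra hθj
          have hyWj : y ∈ W j := hθW j (hadm j k) y hθj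
          exact Set.disjoint_left.1 (hWdisj j i hj) hyWj hyW
        rw [this, sub_self, mul_zero]
      rw [hsum]
      have hfby : (fbar i f) y = f y - f (x i) := by
        simp [hfbardef, ContinuousMap.sub_apply, ContinuousMap.smul_apply, hσWi i y hyW]
      rw [hfby]
      ring
  -- ### continuity of R
  have hWcup : ∀ i, x i ∉ closure ((⋃ j, closure (W j))ᶜ) := by
    intro i hmem
    have h1 : x i ∈ W i ∩ closure ((⋃ j, closure (W j))ᶜ) := ⟨hxW i, hmem⟩
    have h2 := (hWo i).inter_closure h1
    have h3 : W i ∩ (⋃ j, closure (W j))ᶜ = ∅ := by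
      ext y
      simp only [Set.mem_inter_iff, Set.mem_compl_iff, Set.mem_iUnion, Set.mem_empty_iff_false,
        iff_false, not_and, not_not]
      exact fun hy => ⟨i, subset_closure hy⟩
    rw [h3, closure_empty] at h2
    exact h2
  obtain ⟨CA, hCA0, hCA⟩ := hlemA ((⋃ j, closure (W j))ᶜ) hWcup
  have hσsum : ∀ y, 0 ≤ ∑ j, σ j y ∧ ∑ j, σ j y ≤ 1 := by
    intro y
    constructor
    · exact Finset.sum_nonneg fun j _ => (hσ01 j y).1
    · by_cases hy : ∃ j, y ∈ V j
      · obtain ⟨j, hyV⟩ := hy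
        have : ∑ l, σ l y = σ j y := by
          refine Finset.sum_eq_single j (fun l _ hl => ?_)
            (fun h => absurd (Finset.mem_univ j) h)
          refine hσ0 l y fun hyVl => ?_
          exact Set.disjoint_left.1 (hVdisj l j hl) hyVl hyV
        rw [this]
        exact (hσ01 j y).2
      · push_neg at hy
        have : ∀ l ∈ Finset.univ, σ l y = 0 := fun l _ => hσ0 l y (hy l)
        rw [Finset.sum_congr rfl this, Finset.sum_const_zero]
        exact zero_le_one
  have hsumσ1 : ∀ i y, y ∈ closure (W i) → ∑ j, σ j y = 1 := by
    intro i y hy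
    have : ∑ l, σ l y = σ i y := by
      refine Finset.sum_eq_single i (fun l _ hl => ?_) (fun h => absurd (Finset.mem_univ i) h)
      refine hσ0 l y fun hyVl => ?_
      exact Set.disjoint_left.1 (hVdisj l i hl) hyVl (hWcl i hy)
    rw [this]
    exact hσ1 i y hy
  have hpiece1 : ∀ (f p : C(X,ℝ)), (∀ y, (∀ i, y ∉ closure (W i)) → p y = f y) →
      ‖T (p * (1 - ∑ j, σ j))‖ ≤ CA * ‖f‖ := by
    intro f p hp
    have heq : p * (1 - ∑ j, σ j) = f * (1 - ∑ j, σ j) := by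
      ext y
      simp only [ContinuousMap.mul_apply, ContinuousMap.sub_apply, ContinuousMap.one_apply,
        ContinuousMap.sum_apply]
      by_cases hy : ∃ i, y ∈ closure (W i)
      · obtain ⟨i, hyW⟩ := hy
        rw [hsumσ1 i y hyW, sub_self, mul_zero, mul_zero]
      · push_neg at hy
        rw [hp y hy]
    rw [heq]
    have hsupp : ∀ y ∉ (⋃ j, closure (W j))ᶜ, (f * (1 - ∑ j, σ j)) y = 0 := by
      intro y hy
      simp only [Set.mem_compl_iff, not_not, Set.mem_iUnion] at hy
      obtain ⟨i, hyW⟩ := hy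
      simp only [ContinuousMap.mul_apply, ContinuousMap.sub_apply, ContinuousMap.one_apply,
        ContinuousMap.sum_apply]
      rw [hsumσ1 i y hyW, sub_self, mul_zero]
    have hnorm : ‖f * (1 - ∑ j, σ j)‖ ≤ ‖f‖ := by
      refine cnorm_le (norm_nonneg f) fun y => ?_
      simp only [ContinuousMap.mul_apply, ContinuousMap.sub_apply, ContinuousMap.one_apply,
        ContinuousMap.sum_apply]
      rw [abs_mul]
      have h1 : |1 - ∑ j, σ j y| ≤ 1 := by
        rw [abs_of_nonneg (by linarith [(hσsum y).2])]
        linarith [(hσsum y).1]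
      calc |f y| * |1 - ∑ j, σ j y| ≤ |f y| * 1 := mul_le_mul_of_nonneg_left h1 (abs_nonneg _)
        _ ≤ ‖f‖ := by rw [mul_one]; exact cnorm_apply_le f y
    calc ‖T (f * (1 - ∑ j, σ j))‖ ≤ CA * ‖f * (1 - ∑ j, σ j)‖ := hCA _ hsupp
      _ ≤ CA * ‖f‖ := mul_le_mul_of_nonneg_left hnorm hCA0
  -- the uniform bound for R
  have hRbound : ∀ f : C(X,ℝ), ‖R f‖ ≤ (CA + ∑ i, (4 * Cz i + ‖T (σ i)‖)) * ‖f‖ := by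
    intro f
    have hcn := fun i => hcanon i (fbar i f) (hfbar0 i f)
    choose θc hθc using hcn
    have hT := hRrep f θc (fun i k => 1/((k:ℝ)+1)) (fun i k => hθc i k) (fun i => εs0)
    refine le_of_tendsto hT.norm (Eventually.of_forall fun k => ?_)
    set q : C(X,ℝ) := f - ∑ i, fbar i f * (1 - θc i k) with hq
    have hdecomp : T q = T (q * (1 - ∑ j, σ j)) + ∑ j, T (q * σ j) := by
      rw [← map_sum, ← map_add]
      congr 1
      have h1 : ∑ j, q * σ j = q * ∑ j, σ j := (Finset.mul_sum _ _ _).symm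
      rw [h1]
      ring
    -- first piece
    have hqf : ∀ y, (∀ i, y ∉ closure (W i)) → q y = f y := by
      intro y hy
      refine (hFeval f θc _ (fun i k => hθc i k) k y).1 fun i => ?_
      by_contra hθy
      exact hy i (subset_closure (hθW i (hθc i k) y hθy))
    have hb1 : ‖T (q * (1 - ∑ j, σ j))‖ ≤ CA * ‖f‖ := hpiece1 f q hqf
    -- the pieces at the singular points
    have hb2 : ∀ i : Fin n, ‖T (q * σ i)‖ ≤ (4 * Cz i + ‖T (σ i)‖) * ‖f‖ := by
      intro i
      set r : C(X,ℝ) := (f - f (x i) • (1 : C(X,ℝ))) * σ i - fbar i f * (1 - θc i k)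
        with hr
      have hkey : q * σ i = r + f (x i) • σ i := by
        ext y
        have happ : q y = f y - ∑ j, (fbar j f) y * (1 - θc j k y) := by
          simp [hq, ContinuousMap.sub_apply, ContinuousMap.mul_apply,
            ContinuousMap.one_apply, ContinuousMap.sum_apply]
        have hterm : (∑ j, (fbar j f) y * (1 - θc j k y)) * σ i y
            = (fbar i f) y * (1 - θc i k y) := by
          rw [Finset.sum_mul]
          have h1 : ∑ j, (fbar j f) y * (1 - θc j k y) * σ i y
              = (fbar i f) y * (1 - θc i k y) * σ i y := by
            refine Finset.sum_eq_single i (fun j _ hj => ?_)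
              (fun h => absurd (Finset.mem_univ i) h)
            by_cases hθj : θc j k y = 1
            · rw [hθj, sub_self, mul_zero, zero_mul]
            · have hyWj : y ∈ W j := hθW j (hθc j k) y hθj
              rw [hσWj j i y hyWj (fun h => hj h.symm), mul_zero]
          rw [h1]
          by_cases hθi : θc i k y = 1
          · rw [hθi, sub_self, mul_zero, zero_mul]
          · rw [hσWi i y (hθW i (hθc i k) y hθi), mul_one]
        simp only [ContinuousMap.add_apply, ContinuousMap.mul_apply, ContinuousMap.sub_apply,
          ContinuousMap.smul_apply, ContinuousMap.one_apply, smul_eq_mul, hr]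
        rw [happ, sub_mul, hterm]
        ring
      have hrsupp : ∀ y ∉ V i, r y = 0 := by
        intro y hy
        have h1 : σ i y = 0 := hσ0 i y hy
        have h2 : θc i k y = 1 := (hθc i k).2.2.1 y (fun hw => hy (hWV i hw))
        simp only [hr, ContinuousMap.sub_apply, ContinuousMap.mul_apply,
          ContinuousMap.smul_apply, ContinuousMap.one_apply, smul_eq_mul, h1, h2]
        ring
      have hrvan : ∃ N : Set X, IsOpen N ∧ x i ∈ N ∧ ∀ y ∈ N, r y = 0 := by
        obtain ⟨N, hNo, hxN, hN⟩ := (hθc i k).2.1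
        refine ⟨N ∩ W i, hNo.inter (hWo i), ⟨hxN, hxW i⟩, fun y hy => ?_⟩
        have h1 : σ i y = 1 := hσWi i y hy.2
        have h2 : θc i k y = 0 := hN y hy.1
        simp only [hr, ContinuousMap.sub_apply, ContinuousMap.mul_apply,
          ContinuousMap.smul_apply, ContinuousMap.one_apply, smul_eq_mul, h1, h2,
          hfbardef]
        ring
      have hrnorm : ‖r‖ ≤ 4 * ‖f‖ := by
        refine cnorm_le (by positivity) fun y => ?_
        simp only [hr, ContinuousMap.sub_apply, ContinuousMap.mul_apply,
          ContinuousMap.smul_apply, ContinuousMap.one_apply, smul_eq_mul, hfbardef]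
        have e1 : |f y| ≤ ‖f‖ := cnorm_apply_le f y
        have e2 : |f (x i)| ≤ ‖f‖ := cnorm_apply_le f (x i)
        have e3 : |σ i y| ≤ 1 := by
          rw [abs_of_nonneg (hσ01 i y).1]; exact (hσ01 i y).2
        have e4 : |1 - θc i k y| ≤ 1 := by
          rw [abs_of_nonneg (by linarith [((hθc i k).1 y).2])]
          linarith [((hθc i k).1 y).1]
        calc |(f y - f (x i) * 1) * σ i y - (f y - f (x i) * σ i y) * (1 - θc i k y)|
            ≤ |(f y - f (x i) * 1) * σ i y| + |(f y - f (x i) * σ i y) * (1 - θc i k y)| :=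
              abs_sub _ _
          _ = |f y - f (x i) * 1| * |σ i y| + |f y - f (x i) * σ i y| * |1 - θc i k y| := by
              rw [abs_mul, abs_mul]
          _ ≤ (|f y| + |f (x i)|) * 1 + (|f y| + |f (x i)| * |σ i y|) * 1 := by
              refine add_le_add (mul_le_mul ?_ e3 (abs_nonneg _) (by positivity))
                (mul_le_mul ?_ e4 (abs_nonneg _) (by positivity))
              · calc |f y - f (x i) * 1| ≤ |f y| + |f (x i) * 1| := abs_sub _ _
                  _ = |f y| + |f (x i)| := by rw [mul_one]
              · calc |f y - f (x i) * σ i y| ≤ |f y| + |f (x i) * σ i y| := abs_sub _ _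
                  _ = |f y| + |f (x i)| * |σ i y| := by rw [abs_mul]
          _ ≤ (‖f‖ + ‖f‖) * 1 + (‖f‖ + ‖f‖ * 1) * 1 := by
              refine add_le_add (mul_le_mul_of_nonneg_right (add_le_add e1 e2) zero_le_one)
                (mul_le_mul_of_nonneg_right (add_le_add e1 ?_) zero_le_one)
              exact mul_le_mul e2 e3 (abs_nonneg _) (norm_nonneg f)
          _ = 4 * ‖f‖ := by ring
      have hTr : ‖T r‖ ≤ Cz i * (4 * ‖f‖) := by
        calc ‖T r‖ ≤ Cz i * ‖r‖ := hCzB i r hrsupp hrvan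
          _ ≤ Cz i * (4 * ‖f‖) := mul_le_mul_of_nonneg_left hrnorm (hCz0 i)
      have hsmnorm : ‖f (x i) • T (σ i)‖ = |f (x i)| * ‖T (σ i)‖ := by
        have := norm_smul (f (x i)) (T (σ i))
        rwa [Real.norm_eq_abs] at this
      calc ‖T (q * σ i)‖ = ‖T r + f (x i) • T (σ i)‖ := by
            rw [hkey, map_add, map_smul]
        _ ≤ ‖T r‖ + ‖f (x i) • T (σ i)‖ := norm_add_le _ _
        _ ≤ Cz i * (4 * ‖f‖) + |f (x i)| * ‖T (σ i)‖ := by rw [hsmnorm]; exact add_le_add hTr le_rfl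
        _ ≤ Cz i * (4 * ‖f‖) + ‖f‖ * ‖T (σ i)‖ := add_le_add le_rfl
            (mul_le_mul_of_nonneg_right (cnorm_apply_le f (x i)) (norm_nonneg _))
        _ = (4 * Cz i + ‖T (σ i)‖) * ‖f‖ := by ring
    calc ‖T q‖ ≤ ‖T (q * (1 - ∑ j, σ j))‖ + ‖∑ j, T (q * σ j)‖ := by
          rw [hdecomp]; exact norm_add_le _ _
      _ ≤ CA * ‖f‖ + ∑ j, ‖T (q * σ j)‖ := add_le_add hb1 (norm_sum_le _ _)
      _ ≤ CA * ‖f‖ + ∑ j, (4 * Cz j + ‖T (σ j)‖) * ‖f‖ := add_le_add le_rfl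
          (Finset.sum_le_sum fun j _ => hb2 j)
      _ = (CA + ∑ i, (4 * Cz i + ‖T (σ i)‖)) * ‖f‖ := by
          rw [← Finset.sum_mul]
          ring
  have hRcont : Continuous R :=
    AddMonoidHomClass.continuous_of_bound R (CA + ∑ i, (4 * Cz i + ‖T (σ i)‖)) hRbound
  -- ### disjointness preservation of R
  have hR2 : ∀ f g : C(X,ℝ), f * g = 0 → |R f| ⊓ |R g| = 0 := by
    intro f g hfg
    have hpt : ∀ y, f y * g y = 0 := by
      intro y
      have := congrArg (fun h : C(X,ℝ) => h y) hfg
      simpa [ContinuousMap.mul_apply] using this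
    have hexf : ∀ (i : Fin n) (k : ℕ), ∃ θ : C(X,ℝ),
        Adm (x i) (W i) (fbar i f) θ (1/((k:ℝ)+1)) ∧
        ∀ y, θ y ≠ 1 → f (x i) ≠ 0 → f y ≠ 0 := by
      intro i k
      by_cases hf0 : f (x i) = 0
      · obtain ⟨θ, hθ, _⟩ := adm_exists (hWo i) (hxW i) (hfbar0 i f) (hεpos k)
          isOpen_univ (Set.mem_univ (x i))
        exact ⟨θ, hθ, fun y _ hfx => absurd hf0 hfx⟩
      · obtain ⟨θ, hθ, hsup⟩ := adm_exists (hWo i) (hxW i) (hfbar0 i f) (hεpos k)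
          (isOpen_ne_fun f.continuous continuous_const) hf0
        exact ⟨θ, hθ, fun y hy _ => hsup y hy⟩
    have hexg : ∀ (i : Fin n) (k : ℕ), ∃ θ : C(X,ℝ),
        Adm (x i) (W i) (fbar i g) θ (1/((k:ℝ)+1)) ∧
        ∀ y, θ y ≠ 1 → g (x i) ≠ 0 → g y ≠ 0 := by
      intro i k
      by_cases hg0 : g (x i) = 0
      · obtain ⟨θ, hθ, _⟩ := adm_exists (hWo i) (hxW i) (hfbar0 i g) (hεpos k)
          isOpen_univ (Set.mem_univ (x i))
        exact ⟨θ, hθ, fun y _ hgx => absurd hg0 hgx⟩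
      · obtain ⟨θ, hθ, hsup⟩ := adm_exists (hWo i) (hxW i) (hfbar0 i g) (hεpos k)
          (isOpen_ne_fun g.continuous continuous_const) hg0
        exact ⟨θ, hθ, fun y hy _ => hsup y hy⟩
    choose θf hθf hθfs using hexf
    choose θg hθg hθgs using hexg
    have h1 := hRrep f θf (fun i k => 1/((k:ℝ)+1)) (fun i k => hθf i k) (fun i => εs0)
    have h2 := hRrep g θg (fun i k => 1/((k:ℝ)+1)) (fun i k => hθg i k) (fun i => εs0)
    refine aux_tendsto_inf_abs h1 h2 (fun k => hdp _ _ ?_)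
    ext y
    simp only [ContinuousMap.mul_apply, ContinuousMap.zero_apply]
    by_cases hy : ∃ i, y ∈ W i
    · obtain ⟨i, hyW⟩ := hy
      have hF := (hFeval f θf (fun i k => 1/((k:ℝ)+1)) (fun i k => hθf i k) k y).2 i hyW
      have hG := (hFeval g θg (fun i k => 1/((k:ℝ)+1)) (fun i k => hθg i k) k y).2 i hyW
      rw [hF, hG]
      have e1 : f y * g y = 0 := hpt y
      have e4 : f (x i) * g (x i) = 0 := hpt (x i)
      have e2 : f y * (g (x i) * (1 - θg i k y)) = 0 := by
        by_cases hb : θg i k y = 1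
        · rw [hb]; ring
        · by_cases hgx : g (x i) = 0
          · rw [hgx]; ring
          · have hgy : g y ≠ 0 := hθgs i k y hb hgx
            have hfy : f y = 0 := by
              rcases mul_eq_zero.1 (hpt y) with h | h
              · exact h
              · exact absurd h hgy
            rw [hfy]; ring
      have e3 : (f (x i) * (1 - θf i k y)) * g y = 0 := by
        by_cases ha : θf i k y = 1
        · rw [ha]; ring
        · by_cases hfx : f (x i) = 0
          · rw [hfx]; ring
          · have hfy : f y ≠ 0 := hθfs i k y ha hfx
            have hgy : g y = 0 := by
              rcases mul_eq_zero.1 (hpt y) with h | h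
              · exact absurd h hfy
              · exact h
            rw [hgy]; ring
      linear_combination (θf i k y * θg i k y) * e1 + (θf i k y) * e2 + (θg i k y) * e3 +
        ((1 - θf i k y) * (1 - θg i k y)) * e4
    · push_neg at hy
      have hf1 : ∀ i, θf i k y = 1 := by
        intro i
        by_contra h
        exact hy i (hθW i (hθf i k) y h)
      have hg1 : ∀ i, θg i k y = 1 := by
        intro i
        by_contra h
        exact hy i (hθW i (hθg i k) y h)
      rw [(hFeval f θf (fun i k => 1/((k:ℝ)+1)) (fun i k => hθf i k) k y).1 hf1,
        (hFeval g θg (fun i k => 1/((k:ℝ)+1)) (fun i k => hθg i k) k y).1 hg1]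
      exact hpt y
  -- ### conclusion
  refine ⟨R, SL, hRcont, hR2, hS3, ?_, hS5, hS6⟩
  rw [hRdef]
  abel
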